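/- (The pair (f_i, g_i) is a quantized symplectic coordinate on the chart X_i.) Fix 1 ≤ i ≤ l and assume that x_1,…,x_{i−1} and y_{i+1},…,y_l are units of R. Set f = x_1⋯x_i·(y_{i+1}⋯y_l)^{−1} and g = y_i⋯y_l·(x_1⋯x_{i−1})^{−1}. Then f·g = x_i·y_i and g·f = x_i·y_i + h·1; in particular g·f − f·g = h·1. -/

import Mathlib

open scoped List

/-- The ordered product `f_{j₁} f_{j₂} ⋯` of the values of `f : Fin l → R` over the indices
`j ∈ Fin l` satisfying the (decidable) predicate `p`, taken in increasing order of indices. -/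
def ordProd {R : Type*} [Ring R] {l : ℕ} (f : Fin l → R) (p : Fin l → Prop)
    [DecidablePred p] : R :=
  (((List.finRange l).filter fun j => decide (p j)).map f).prod

open List in
lemma range_filter_le' (l m : ℕ) (hm : m < l) :
    (List.range l).filter (fun n => decide (n ≤ m)) =
      (List.range l).filter (fun n => decide (n < m)) ++ [m] := by
  induction l with
  | zero => omega
  | succ l ih =>
    rw [List.range_succ, List.filter_append, List.filter_append]
    rcases eq_or_lt_of_le (Nat.lt_succ_iff.mp hm) with rfl | hml
    · have h1 : (range m).filter (fun n => decide (n ≤ m)) = range m :=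
        List.filter_eq_self.mpr (by intro a ha; simp [List.mem_range] at ha ⊢; omega)
      have h2 : (range m).filter (fun n => decide (n < m)) = range m :=
        List.filter_eq_self.mpr (by intro a ha; simp [List.mem_range] at ha ⊢; omega)
      rw [h1, h2]; simp
    · rw [ih hml]
      simp [Nat.not_le.mpr hml, show ¬ l < m by omega]

open List in
lemma range_filter_ge' (l m : ℕ) (hm : m < l) :
    (List.range l).filter (fun n => decide (m ≤ n)) =
      m :: (List.range l).filter (fun n => decide (m < n)) := by
  induction l with
  | zero => omega
  | succ l ih =>
    rw [List.range_succ, List.filter_append, List.filter_append]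
    rcases eq_or_lt_of_le (Nat.lt_succ_iff.mp hm) with rfl | hml
    · have h1 : (range m).filter (fun n => decide (m ≤ n)) = [] :=
        List.filter_eq_nil_iff.mpr (by intro a ha; simp [List.mem_range] at ha ⊢; omega)
      have h2 : (range m).filter (fun n => decide (m < n)) = [] :=
        List.filter_eq_nil_iff.mpr (by intro a ha; simp [List.mem_range] at ha ⊢; omega)
      rw [h1, h2]; simp
    · rw [ih hml]
      simp [Nat.le_of_lt hml, hml]

lemma finRange_filter_le {l : ℕ} (i : Fin l) :
    (List.finRange l).filter (fun j => decide (j ≤ i)) =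
      (List.finRange l).filter (fun j => decide (j < i)) ++ [i] := by
  apply List.map_injective_iff.mpr Fin.val_injective
  have e1 : (fun j : Fin l => decide (j ≤ i)) = (fun n : ℕ => decide (n ≤ i.val)) ∘ Fin.val :=
    funext fun j => decide_eq_decide.mpr Fin.le_def
  have e2 : (fun j : Fin l => decide (j < i)) = (fun n : ℕ => decide (n < i.val)) ∘ Fin.val :=
    funext fun j => decide_eq_decide.mpr Fin.lt_def
  rw [List.map_append, e1, e2, ← List.filter_map, ← List.filter_map, List.map_coe_finRange_eq_range,
    range_filter_le' l i.val i.isLt]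
  simp

lemma finRange_filter_ge {l : ℕ} (i : Fin l) :
    (List.finRange l).filter (fun j => decide (i ≤ j)) =
      i :: (List.finRange l).filter (fun j => decide (i < j)) := by
  apply List.map_injective_iff.mpr Fin.val_injective
  have e1 : (fun j : Fin l => decide (i ≤ j)) = (fun n : ℕ => decide (i.val ≤ n)) ∘ Fin.val :=
    funext fun j => decide_eq_decide.mpr Fin.le_def
  have e2 : (fun j : Fin l => decide (i < j)) = (fun n : ℕ => decide (i.val < n)) ∘ Fin.val :=
    funext fun j => decide_eq_decide.mpr Fin.lt_def
  rw [List.map_cons, e1, e2, ← List.filter_map, ← List.filter_map, List.map_coe_finRange_eq_range,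
    range_filter_ge' l i.val i.isLt]

lemma ordProd_commute {R : Type*} [Ring R] {l : ℕ} (f : Fin l → R) (p : Fin l → Prop)
    [DecidablePred p] (r : R) (hc : ∀ j, p j → Commute (f j) r) :
    Commute (ordProd f p) r := by
  apply Commute.list_prod_left
  intro a ha
  obtain ⟨j, hj, rfl⟩ := List.mem_map.mp ha
  exact hc j (by simpa using (List.mem_filter.mp hj).2)

lemma ordProd_isUnit {R : Type*} [Ring R] {l : ℕ} (f : Fin l → R) (p : Fin l → Prop)
    [DecidablePred p] (hu : ∀ j, p j → IsUnit (f j)) : IsUnit (ordProd f p) := by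
  apply List.prod_isUnit
  intro a ha
  obtain ⟨j, hj, rfl⟩ := List.mem_map.mp ha
  exact hu j (by simpa using (List.mem_filter.mp hj).2)

lemma conj_units_aux {R : Type*} [Ring R] (a b : R) (uA uB : Rˣ)
    (cAa : Commute (↑uA) a) (cAb : Commute (↑uA) b)
    (cBa : Commute (↑uB) a) (cBb : Commute (↑uB) b) :
    (↑uA * a * ↑uB⁻¹) * (b * ↑uB * ↑uA⁻¹) = a * b ∧
    (b * ↑uB * ↑uA⁻¹) * (↑uA * a * ↑uB⁻¹) = b * a := by
  constructor
  · simp only [mul_assoc]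
    rw [show (↑uB⁻¹ : R) * (b * (↑uB * ↑uA⁻¹)) = b * ↑uA⁻¹ by
      rw [← mul_assoc, cBb.units_inv_left.eq, mul_assoc, Units.inv_mul_cancel_left]]
    rw [show a * (b * (↑uA⁻¹ : R)) = ↑uA⁻¹ * (a * b) by
      rw [← mul_assoc, ((cAa.mul_right cAb).symm.units_inv_right).eq]]
    rw [Units.mul_inv_cancel_left]
  · simp only [mul_assoc]
    rw [show (↑uA⁻¹ : R) * (↑uA * (a * ↑uB⁻¹)) = a * ↑uB⁻¹ from Units.inv_mul_cancel_left _ _]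
    rw [show (↑uB : R) * (a * ↑uB⁻¹) = a by
      rw [← mul_assoc, cBa.eq, Units.mul_inv_cancel_right]]

/-- The pair `(f_i, g_i)` is a quantized symplectic coordinate on the chart `X_i`:
with `x_1, …, x_{i−1}` and `y_{i+1}, …, y_l` units (here indices are `Fin l`, so `j < i`
and `i < j` respectively), and
`f = x_1⋯x_i (y_{i+1}⋯y_l)⁻¹`, `g = y_i⋯y_l (x_1⋯x_{i−1})⁻¹`, one has
`f g = x_i y_i`, `g f = x_i y_i + h·1`, and in particular `g f − f g = h·1`. -/
theorem quantized_symplectic_coordinates {k : Type*} [CommRing k] {R : Type*} [Ring R]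
    [Algebra k R] (h : k) (l : ℕ) (x y : Fin l → R)
    (hxx : ∀ p q : Fin l, x p * x q = x q * x p)
    (hyy : ∀ p q : Fin l, y p * y q = y q * y p)
    (hyx : ∀ p q : Fin l, p ≠ q → y p * x q = x q * y p)
    (hcan : ∀ p : Fin l, y p * x p - x p * y p = h • (1 : R))
    (i : Fin l)
    (hxu : ∀ j : Fin l, j < i → IsUnit (x j))
    (hyu : ∀ j : Fin l, i < j → IsUnit (y j)) :
    ordProd x (· ≤ i) * Ring.inverse (ordProd y (i < ·)) *
        (ordProd y (i ≤ ·) * Ring.inverse (ordProd x (· < i))) = x i * y i ∧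
    ordProd y (i ≤ ·) * Ring.inverse (ordProd x (· < i)) *
        (ordProd x (· ≤ i) * Ring.inverse (ordProd y (i < ·))) = x i * y i + h • (1 : R) ∧
    ordProd y (i ≤ ·) * Ring.inverse (ordProd x (· < i)) *
          (ordProd x (· ≤ i) * Ring.inverse (ordProd y (i < ·))) -
        ordProd x (· ≤ i) * Ring.inverse (ordProd y (i < ·)) *
          (ordProd y (i ≤ ·) * Ring.inverse (ordProd x (· < i))) = h • (1 : R) := by
  obtain ⟨uA, huA⟩ := ordProd_isUnit x (· < i) hxu
  obtain ⟨uB, huB⟩ := ordProd_isUnit y (i < ·) hyu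
  have hXdef : ordProd x (· ≤ i) = ↑uA * x i := by
    unfold ordProd
    rw [finRange_filter_le i, List.map_append, List.prod_append, huA]
    simp
    rfl
  have hYdef : ordProd y (i ≤ ·) = y i * ↑uB := by
    unfold ordProd
    rw [finRange_filter_ge i, List.map_cons, List.prod_cons, huB]
    rfl
  have cAa : Commute (↑uA : R) (x i) := huA ▸ ordProd_commute x (· < i) (x i)
      (fun j _ => hxx j i)
  have cAb : Commute (↑uA : R) (y i) := huA ▸ ordProd_commute x (· < i) (y i)
      (fun j hj => (show Commute (y i) (x j) from hyx i j hj.ne').symm)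
  have cBa : Commute (↑uB : R) (x i) := huB ▸ ordProd_commute y (i < ·) (x i)
      (fun j hj => hyx j i hj.ne')
  have cBb : Commute (↑uB : R) (y i) := huB ▸ ordProd_commute y (i < ·) (y i)
      (fun j _ => hyy j i)
  obtain ⟨e1, e2⟩ := conj_units_aux (x i) (y i) uA uB cAa cAb cBa cBb
  have hIA : Ring.inverse (ordProd x (· < i)) = (↑uA⁻¹ : R) := by
    rw [← huA, Ring.inverse_unit]
  have hIB : Ring.inverse (ordProd y (i < ·)) = (↑uB⁻¹ : R) := by
    rw [← huB, Ring.inverse_unit]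
  rw [hXdef, hYdef, hIA, hIB]
  refine ⟨e1, ?_, ?_⟩
  · rw [e2, eq_add_of_sub_eq (hcan i)]
    exact add_comm _ _
  · rw [e1, e2, eq_add_of_sub_eq (hcan i)]
    exact add_sub_cancel_right _ _
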